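/- A partial cube G is a median graph if and only if for every edge ab of G the set U_ab is convex. -/

import Mathlib

open SimpleGraph

universe u

variable {V : Type u}

/-- The geodesic interval between two vertices: the set of vertices lying on
shortest paths between them. -/
def gInterval (G : SimpleGraph V) (x y : V) : Set V :=
  {z | G.dist x z + G.dist z y = G.dist x y}

/-- A set of vertices is (geodesically) convex. -/
def GConvex (G : SimpleGraph V) (C : Set V) : Prop :=
  ∀ x ∈ C, ∀ y ∈ C, gInterval G x y ⊆ C

/-- `Wside G a b` is the set `W_ab` of vertices strictly closer to `a` than to `b`. -/
def Wside (G : SimpleGraph V) (a b : V) : Set V :=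
  {x | G.dist a x < G.dist b x}

/-- `Uside G a b` is the set `U_ab` of vertices of `W_ab` having a neighbour in `W_ba`. -/
def Uside (G : SimpleGraph V) (a b : V) : Set V :=
  {x | x ∈ Wside G a b ∧ ∃ y, G.Adj x y ∧ y ∈ Wside G b a}

/-- A graph is bipartite if it admits a proper 2-colouring. -/
def IsBipartiteGraph (G : SimpleGraph V) : Prop :=
  ∃ c : V → Bool, ∀ u v, G.Adj u v → c u ≠ c v

/-- A partial cube: a connected bipartite graph all of whose half-spaces `W_ab`, `W_ba`
are convex (Djoković's characterization). -/
def IsPartialCube (G : SimpleGraph V) : Prop :=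
  G.Connected ∧ IsBipartiteGraph G ∧
    ∀ a b, G.Adj a b → GConvex G (Wside G a b) ∧ GConvex G (Wside G b a)

/-- The Djoković–Winkler relation Θ between (unordered) edges. -/
def ThetaRel (G : SimpleGraph V) (e f : Sym2 V) : Prop :=
  ∃ x y u v : V, e = s(x, y) ∧ f = s(u, v) ∧
    G.dist x u + G.dist y v ≠ G.dist x v + G.dist y u

/-- The geodesic convex hull of a set of vertices. -/
def gConvexHull (G : SimpleGraph V) (A : Set V) : Set V :=
  ⋂₀ {C : Set V | GConvex G C ∧ A ⊆ C}

section Aux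

variable {G : SimpleGraph V}

private lemma walk_parity {c : V → Bool} (hc : ∀ u v, G.Adj u v → c u ≠ c v)
    {x y : V} (p : G.Walk x y) : (c x = c y) ↔ Even p.length := by
  induction p with
  | nil => simp
  | @cons a b d hadj q ih =>
    have hab := hc _ _ hadj
    simp only [SimpleGraph.Walk.length_cons, Nat.even_add_one, ← ih]
    cases hx : c a <;> cases hy : c b <;> cases hz : c d <;> simp_all

private lemma dist_parity (hconn : G.Connected) {c : V → Bool}
    (hc : ∀ u v, G.Adj u v → c u ≠ c v) (x y : V) :
    (c x = c y) ↔ Even (G.dist x y) := by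
  obtain ⟨p, hp⟩ := hconn.exists_walk_length_eq_dist x y
  rw [← hp]; exact walk_parity hc p

private lemma adj_dist_cases (hconn : G.Connected) {c : V → Bool}
    (hc : ∀ u v, G.Adj u v → c u ≠ c v) {x y : V} (hxy : G.Adj x y) (z : V) :
    G.dist x z = G.dist y z + 1 ∨ G.dist y z = G.dist x z + 1 := by
  have h1 : G.dist x z ≤ G.dist x y + G.dist y z := hconn.dist_triangle
  have h2 : G.dist y z ≤ G.dist y x + G.dist x z := hconn.dist_triangle
  have hxy1 : G.dist x y = 1 := dist_eq_one_iff_adj.mpr hxy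
  have hyx1 : G.dist y x = 1 := dist_eq_one_iff_adj.mpr hxy.symm
  have hne : G.dist x z ≠ G.dist y z := by
    intro h
    have p1 := dist_parity hconn hc x z
    have p2 := dist_parity hconn hc y z
    have hb : (c x = c z) ↔ ¬ (c y = c z) := by
      have := hc _ _ hxy
      cases hx : c x <;> cases hy : c y <;> cases hz : c z <;> simp_all
    rw [p1, p2, h] at hb
    exact (iff_not_self hb)
  omega

private lemma side_total (hconn : G.Connected) {c : V → Bool}
    (hc : ∀ u v, G.Adj u v → c u ≠ c v) {x y : V} (hxy : G.Adj x y) (z : V) :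
    z ∈ Wside G x y ∨ z ∈ Wside G y x := by
  rcases adj_dist_cases hconn hc hxy z with h | h
  · right; simp only [Wside, Set.mem_setOf_eq]; omega
  · left; simp only [Wside, Set.mem_setOf_eq]; omega

private lemma side_disjoint {x y z : V} (h1 : z ∈ Wside G x y) (h2 : z ∈ Wside G y x) :
    False := by
  simp only [Wside, Set.mem_setOf_eq] at h1 h2; omega

/-- The crossing lemma: if `st` is an edge crossing the cut of edge `pq`, and the
observer `z` is on `s`'s side, then `d z t = d z s + 1`. -/
private lemma cross_dist (hconn : G.Connected) {c : V → Bool}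
    (hc : ∀ u v, G.Adj u v → c u ≠ c v)
    (hW : ∀ a b, G.Adj a b → GConvex G (Wside G a b) ∧ GConvex G (Wside G b a))
    {p q s t z : V} (hpq : G.Adj p q) (hst : G.Adj s t)
    (hs : s ∈ Wside G p q) (ht : t ∈ Wside G q p) (hz : z ∈ Wside G p q) :
    G.dist z t = G.dist z s + 1 := by
  have dc : ∀ a b : V, G.dist a b = G.dist b a := fun a b => SimpleGraph.dist_comm
  rcases adj_dist_cases hconn hc hst z with h | h
  · -- d s z = d t z + 1, so t is between z and s
    exfalso
    have hmem : t ∈ gInterval G z s := by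
      simp only [gInterval, Set.mem_setOf_eq]
      have h1 : G.dist t s = 1 := dist_eq_one_iff_adj.mpr hst.symm
      have h2 := dc z t
      have h3 := dc z s
      omega
    exact side_disjoint ((hW p q hpq).1 z hz s hs hmem) ht
  · have h2 := dc z t
    have h3 := dc z s
    omega

private lemma exists_step (hconn : G.Connected) {u v : V} (h : u ≠ v) :
    ∃ t, G.Adj u t ∧ G.dist t v + 1 = G.dist u v := by
  have hpos : 0 < G.dist u v := hconn.pos_dist_of_ne h
  obtain ⟨p, hp⟩ := hconn.exists_walk_length_eq_dist u v
  cases p with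
  | nil => simp at hp; exact absurd rfl h
  | cons hadj q =>
    rename_i b
    refine ⟨b, hadj, ?_⟩
    have h1 : G.dist b v ≤ q.length := dist_le q
    have h2 : G.dist u v ≤ G.dist u b + G.dist b v := hconn.dist_triangle
    have h3 : G.dist u b = 1 := dist_eq_one_iff_adj.mpr hadj
    simp only [SimpleGraph.Walk.length_cons] at hp
    omega

/-- crossing vertex: a geodesic from one side of a cut to the other contains a
vertex of the near side with a neighbour on the far side. -/
private lemma exists_crossing (hconn : G.Connected) {c : V → Bool}
    (hc : ∀ u v, G.Adj u v → c u ≠ c v) {p q : V} (hpq : G.Adj p q) :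
    ∀ n {z₁ z₂ : V}, G.dist z₁ z₂ = n → z₁ ∈ Wside G p q → z₂ ∈ Wside G q p →
    ∃ s t, s ∈ Wside G p q ∧ t ∈ Wside G q p ∧ G.Adj s t ∧
      G.dist z₁ s + G.dist s z₂ = G.dist z₁ z₂ := by
  intro n
  induction n using Nat.strong_induction_on with
  | _ n ih =>
    intro z₁ z₂ hn h1 h2
    have hne : z₁ ≠ z₂ := by rintro rfl; exact side_disjoint h1 h2
    obtain ⟨t₀, hadj, hd⟩ := exists_step hconn hne
    rcases side_total hconn hc hpq t₀ with ht₀ | ht₀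
    · -- t₀ still on near side: recurse
      obtain ⟨s, t, hs, ht, hst, hsum⟩ :=
        ih (G.dist t₀ z₂) (by omega) rfl ht₀ h2
      refine ⟨s, t, hs, ht, hst, ?_⟩
      have h3 : G.dist z₁ s ≤ G.dist z₁ t₀ + G.dist t₀ s := hconn.dist_triangle
      have h4 : G.dist z₁ z₂ ≤ G.dist z₁ s + G.dist s z₂ := hconn.dist_triangle
      have h5 : G.dist z₁ t₀ = 1 := dist_eq_one_iff_adj.mpr hadj
      omega
    · refine ⟨z₁, t₀, h1, ht₀, hadj, ?_⟩
      have : G.dist z₁ z₁ = 0 := dist_self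
      have h5 : G.dist z₁ t₀ = 1 := dist_eq_one_iff_adj.mpr hadj
      have h4 : G.dist z₁ z₂ ≤ G.dist z₁ t₀ + G.dist t₀ z₂ := hconn.dist_triangle
      omega

end Aux

section Main

variable {G : SimpleGraph V}

/-- Key lemma: if `u` is not between `v` and `w`, there is a neighbour of `u`
closer to both `v` and `w`. Uses convexity of the `Uside` sets. -/
private lemma key_step (hconn : G.Connected) {c : V → Bool}
    (hc : ∀ u v, G.Adj u v → c u ≠ c v)
    (hW : ∀ a b, G.Adj a b → GConvex G (Wside G a b) ∧ GConvex G (Wside G b a))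
    (hU : ∀ a b, G.Adj a b → GConvex G (Uside G a b)) :
    ∀ n {u v w : V}, G.dist u v = n →
    G.dist v u + G.dist u w ≠ G.dist v w →
    ∃ t, G.Adj u t ∧ G.dist t v + 1 = G.dist u v ∧ G.dist t w + 1 = G.dist u w := by
  intro n
  induction n using Nat.strong_induction_on with
  | _ n ih =>
    intro u v w hn hmed
    have dc : ∀ a b : V, G.dist a b = G.dist b a := fun a b => SimpleGraph.dist_comm
    have ds : ∀ a : V, G.dist a a = 0 := fun a => SimpleGraph.dist_self
    have hne_uv : u ≠ v := by
      rintro rfl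
      exact hmed (by rw [ds]; omega)
    have hpos : 0 < G.dist u v := hconn.pos_dist_of_ne hne_uv
    obtain ⟨u₁, hadj₁, hd₁⟩ := exists_step hconn hne_uv
    rcases adj_dist_cases hconn hc hadj₁ w with hcase | hcase
    · -- d u w = d u₁ w + 1 : u₁ works
      exact ⟨u₁, hadj₁, hd₁, by omega⟩
    · -- d u₁ w = d u w + 1
      have hmed₁ : G.dist v u₁ + G.dist u₁ w ≠ G.dist v w := by
        have h1 := dc v u₁
        have h2 := dc v u
        intro h
        exact hmed (by omega)
      obtain ⟨t₁, hadjt₁, ht₁v, ht₁w⟩ := ih (G.dist u₁ v) (by omega) rfl hmed₁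
      -- d t₁ v + 2 = d u v, d t₁ w = d u w
      have hdut₁ : G.dist u t₁ = 2 := by
        have hne : u ≠ t₁ := by
          rintro rfl
          omega
        have hnadj : ¬ G.Adj u t₁ := by
          intro hadj
          have h1 := hc _ _ hadj₁
          have h2 := hc _ _ hadjt₁
          have h3 := hc _ _ hadj
          cases hx : c u <;> cases hy : c u₁ <;> cases hz : c t₁ <;> simp_all
        have h4 : G.dist u t₁ ≤ G.dist u u₁ + G.dist u₁ t₁ := hconn.dist_triangle
        have h5 : G.dist u u₁ = 1 := dist_eq_one_iff_adj.mpr hadj₁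
        have h6 : G.dist u₁ t₁ = 1 := dist_eq_one_iff_adj.mpr hadjt₁
        have h7 : G.dist u t₁ ≠ 0 := fun h0 => hne (hconn.dist_eq_zero_iff.mp h0)
        have h8 : G.dist u t₁ ≠ 1 := fun h1 => hnadj (dist_eq_one_iff_adj.mp h1)
        omega
      have h5 : G.dist u u₁ = 1 := dist_eq_one_iff_adj.mpr hadj₁
      have h6 : G.dist u₁ t₁ = 1 := dist_eq_one_iff_adj.mpr hadjt₁
      -- side memberships
      have hu_side : u ∈ Wside G u₁ t₁ := by
        simp only [Wside, Set.mem_setOf_eq]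
        have := dc u u₁; have := dc u t₁; omega
      have hv_side : v ∈ Wside G t₁ u₁ := by
        simp only [Wside, Set.mem_setOf_eq]
        omega
      have hw_side : w ∈ Wside G t₁ u₁ := by
        simp only [Wside, Set.mem_setOf_eq]
        omega
      have hu' : u ∈ Wside G u u₁ := by
        simp only [Wside, Set.mem_setOf_eq]
        rw [ds]; have := dc u₁ u; omega
      have hw' : w ∈ Wside G u u₁ := by
        simp only [Wside, Set.mem_setOf_eq]; omega
      have hu₁' : u₁ ∈ Wside G u₁ u := by
        simp only [Wside, Set.mem_setOf_eq]
        rw [ds]; have := dc u u₁; omega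
      have hu₁top : u₁ ∈ Wside G u₁ t₁ := by
        simp only [Wside, Set.mem_setOf_eq]
        rw [ds]; have := dc u₁ t₁; omega
      have ht₁bot : t₁ ∈ Wside G t₁ u₁ := by
        simp only [Wside, Set.mem_setOf_eq]
        rw [ds]; omega
      -- crossing vertex of a u-w geodesic w.r.t. the cut of edge u₁t₁
      obtain ⟨s, s', hs_side, hs'_side, hss', hsum⟩ :=
        exists_crossing hconn hc hadjt₁ (G.dist u w) rfl hu_side hw_side
      -- s is on a u-w geodesic, hence in Wside u u₁ by half-space convexity
      have hs_uu₁ : s ∈ Wside G u u₁ := by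
        refine (hW u u₁ hadj₁).1 u hu' w hw' ?_
        simp only [gInterval, Set.mem_setOf_eq]
        exact hsum
      -- crossing lemma for cut (u,u₁) with crossing edge (u,u₁), observer s
      have hsu₁ : G.dist s u₁ = G.dist s u + 1 :=
        cross_dist hconn hc hW hadj₁ hadj₁ hu' hu₁' hs_uu₁
      -- u lies between u₁ and s
      have hu_int : u ∈ gInterval G u₁ s := by
        simp only [gInterval, Set.mem_setOf_eq]
        have := dc u₁ u; have := dc u₁ s; have := dc u s; omega
      -- u₁ and s are in Uside u₁ t₁, which is convex
      have hu₁U : u₁ ∈ Uside G u₁ t₁ := ⟨hu₁top, t₁, hadjt₁, ht₁bot⟩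
      have hsU : s ∈ Uside G u₁ t₁ := ⟨hs_side, s', hss', hs'_side⟩
      have huU : u ∈ Uside G u₁ t₁ := hU u₁ t₁ hadjt₁ u₁ hu₁U s hsU hu_int
      obtain ⟨_, t, hut, ht_side⟩ := huU
      refine ⟨t, hut, ?_, ?_⟩
      · have := cross_dist hconn hc hW hadjt₁.symm hut.symm ht_side hu_side hv_side
        have := dc v u; have := dc v t; omega
      · have := cross_dist hconn hc hW hadjt₁.symm hut.symm ht_side hu_side hw_side
        have := dc w u; have := dc w t; omega

private lemma med_exists (hconn : G.Connected) {c : V → Bool}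
    (hc : ∀ u v, G.Adj u v → c u ≠ c v)
    (hW : ∀ a b, G.Adj a b → GConvex G (Wside G a b) ∧ GConvex G (Wside G b a))
    (hU : ∀ a b, G.Adj a b → GConvex G (Uside G a b)) :
    ∀ n (u v w : V), G.dist u v + G.dist v w + G.dist w u = n →
    ∃ m, m ∈ gInterval G u v ∧ m ∈ gInterval G v w ∧ m ∈ gInterval G w u := by
  intro n
  induction n using Nat.strong_induction_on with
  | _ n ih =>
    intro u v w hn
    have dc : ∀ a b : V, G.dist a b = G.dist b a := fun a b => SimpleGraph.dist_comm
    have ds : ∀ a : V, G.dist a a = 0 := fun a => SimpleGraph.dist_self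
    by_cases hcase : G.dist v u + G.dist u w = G.dist v w
    · refine ⟨u, ?_, ?_, ?_⟩ <;> simp only [gInterval, Set.mem_setOf_eq]
      · rw [ds]; omega
      · exact hcase
      · rw [ds]; omega
    · obtain ⟨t, hadj, htv, htw⟩ := key_step hconn hc hW hU (G.dist u v) rfl hcase
      have hvw := dc v w
      have hwu := dc w u
      have hwt := dc w t
      have htv' := dc t v
      obtain ⟨m, hm1, hm2, hm3⟩ :=
        ih (G.dist t v + G.dist v w + G.dist w t) (by omega) t v w rfl
      simp only [gInterval, Set.mem_setOf_eq] at hm1 hm2 hm3 ⊢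
      have hut : G.dist u t = 1 := dist_eq_one_iff_adj.mpr hadj
      have e1 : G.dist u m ≤ G.dist u t + G.dist t m := hconn.dist_triangle
      have e2 : G.dist u v ≤ G.dist u m + G.dist m v := hconn.dist_triangle
      have e3 : G.dist m u ≤ G.dist m t + G.dist t u := hconn.dist_triangle
      have e4 : G.dist w u ≤ G.dist w m + G.dist m u := hconn.dist_triangle
      have := dc u m
      have := dc m t
      have := dc t u
      have := dc m u
      exact ⟨m, by omega, hm2, by omega⟩

private lemma med_unique (hconn : G.Connected) {c : V → Bool}
    (hc : ∀ u v, G.Adj u v → c u ≠ c v)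
    (hW : ∀ a b, G.Adj a b → GConvex G (Wside G a b) ∧ GConvex G (Wside G b a))
    {u v w m₁ m₂ : V}
    (h₁ : m₁ ∈ gInterval G u v ∧ m₁ ∈ gInterval G v w ∧ m₁ ∈ gInterval G w u)
    (h₂ : m₂ ∈ gInterval G u v ∧ m₂ ∈ gInterval G v w ∧ m₂ ∈ gInterval G w u) :
    m₁ = m₂ := by
  by_contra hne
  have dc : ∀ a b : V, G.dist a b = G.dist b a := fun a b => SimpleGraph.dist_comm
  have ds : ∀ a : V, G.dist a a = 0 := fun a => SimpleGraph.dist_self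
  obtain ⟨y, hadj, hd⟩ := exists_step hconn hne
  have hm₁ : m₁ ∈ Wside G m₁ y := by
    simp only [Wside, Set.mem_setOf_eq]
    rw [ds]
    have h1 : G.dist y m₁ = 1 := dist_eq_one_iff_adj.mpr hadj.symm
    omega
  have hm₂ : m₂ ∈ Wside G y m₁ := by
    simp only [Wside, Set.mem_setOf_eq]
    have := dc m₁ m₂
    omega
  have hpair : ∀ z₁ z₂ : V,
      m₁ ∈ gInterval G z₁ z₂ → m₂ ∈ gInterval G z₁ z₂ →
      (z₁ ∈ Wside G m₁ y → z₂ ∈ Wside G m₁ y → False) ∧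
      (z₁ ∈ Wside G y m₁ → z₂ ∈ Wside G y m₁ → False) := by
    intro z₁ z₂ hz₁ hz₂
    constructor
    · intro ha hb
      exact side_disjoint ((hW m₁ y hadj).1 z₁ ha z₂ hb hz₂) hm₂
    · intro ha hb
      exact side_disjoint hm₁ ((hW m₁ y hadj).2 z₁ ha z₂ hb hz₁)
  have huv := hpair u v h₁.1 h₂.1
  have hvw := hpair v w h₁.2.1 h₂.2.1
  have hwu := hpair w u h₁.2.2 h₂.2.2
  rcases side_total hconn hc hadj u with hu | hu <;>
    rcases side_total hconn hc hadj v with hv | hv <;>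
      rcases side_total hconn hc hadj w with hw | hw
  · exact huv.1 hu hv
  · exact huv.1 hu hv
  · exact hwu.1 hw hu
  · exact hvw.2 hv hw
  · exact hvw.1 hv hw
  · exact hwu.2 hw hu
  · exact huv.2 hu hv
  · exact huv.2 hu hv

end Main

/-- A partial cube is a median graph iff `U_ab` is convex for every edge. -/
theorem stmt_11 (G : SimpleGraph V) (hG : IsPartialCube G) :
    (∀ u v w : V, ∃! m : V,
        m ∈ gInterval G u v ∧ m ∈ gInterval G v w ∧ m ∈ gInterval G w u) ↔
      (∀ a b, G.Adj a b → GConvex G (Uside G a b)) := by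
  obtain ⟨hconn, ⟨c, hc⟩, hW⟩ := hG
  have dc : ∀ a b : V, G.dist a b = G.dist b a := fun a b => SimpleGraph.dist_comm
  constructor
  · intro hMed a b hab
    intro x hx z hz y hy
    simp only [gInterval, Set.mem_setOf_eq] at hy
    obtain ⟨hxW, x', hxx', hx'W⟩ := hx
    obtain ⟨hzW, z', hzz', hz'W⟩ := hz
    have hyW : y ∈ Wside G a b := (hW a b hab).1 x hxW z hzW hy
    have hyx' : G.dist y x' = G.dist y x + 1 :=
      cross_dist hconn hc hW hab hxx' hxW hx'W hyW
    have hyz' : G.dist y z' = G.dist y z + 1 :=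
      cross_dist hconn hc hW hab hzz' hzW hz'W hyW
    have hzx' : G.dist z x' = G.dist z x + 1 :=
      cross_dist hconn hc hW hab hxx' hxW hx'W hzW
    have hx'z : G.dist x' z = G.dist x' z' + 1 :=
      cross_dist hconn hc hW hab.symm hzz'.symm hz'W hzW hx'W
    obtain ⟨m, ⟨hm1, hm2, hm3⟩, -⟩ := hMed y x' z'
    simp only [gInterval, Set.mem_setOf_eq] at hm1 hm2 hm3
    have hym : G.dist y m = 1 := by
      have c1 := dc x' z
      have c2 := dc z x
      have c3 := dc x y
      have c4 := dc y m
      have c5 := dc m x'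
      have c6 := dc m z'
      have c7 := dc z' m
      have c8 := dc m y
      have c9 := dc z' y
      have c10 := dc y z'
      omega
    have hmW : m ∈ Wside G b a := (hW a b hab).2 x' hx'W z' hz'W hm2
    exact ⟨hyW, m, dist_eq_one_iff_adj.mp hym, hmW⟩
  · intro hU u v w
    obtain ⟨m, hm⟩ := med_exists hconn hc hW hU _ u v w rfl
    exact ⟨m, hm, fun m' hm' => med_unique hconn hc hW hm' hm⟩
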